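/- The function R(u;τ) := ∑_{ν ∈ 1/2+ℤ} (sgn(ν) − E((ν + Im(u)/Im(τ))·√(2 Im τ))) · (−1)^{ν−1/2} · e^{−πiν²τ} · e^{−2πiνu} satisfies R(u; τ) + e^{−2πiu − πiτ} R(u+τ; τ) = 2 e^{−πiu − πiτ/4} for all τ in the upper half plane and u ∈ ℂ. -/

import Mathlib

open scoped BigOperators

/-- `E(t) = 2∫₀ᵗ e^{−πu²} du`. -/
noncomputable def Efun (t : ℝ) : ℝ := 2 * ∫ u in (0:ℝ)..t, Real.exp (-Real.pi * u ^ 2)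

/-- Zwegers' function
`R(u;τ) = ∑_{ν ∈ 1/2+ℤ} (sgn(ν) − E((ν + Im u / Im τ)√(2 Im τ)))(−1)^{ν−1/2} e^{−πiν²τ} e^{−2πiνu}`,
indexed by `ν = n + 1/2`, `n ∈ ℤ`. -/
noncomputable def Rfun (u τ : ℂ) : ℂ :=
  ∑' n : ℤ,
    ((Real.sign ((n : ℝ) + 1/2)
        - Efun (((n : ℝ) + 1/2 + u.im / τ.im) * Real.sqrt (2 * τ.im)) : ℝ) : ℂ)
      * (-1 : ℂ) ^ n
      * Complex.exp (-Real.pi * Complex.I * ((n : ℂ) + 1/2) ^ 2 * τ)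
      * Complex.exp (-2 * Real.pi * Complex.I * ((n : ℂ) + 1/2) * u)

open MeasureTheory Set Filter

namespace ZwegersAux

lemma gauss_integrable : Integrable (fun x : ℝ => Real.exp (-Real.pi * x ^ 2)) :=
  integrable_exp_neg_mul_sq Real.pi_pos

lemma integral_gauss_Ioi_zero : ∫ x in Ioi (0:ℝ), Real.exp (-Real.pi * x ^ 2) = 1 / 2 := by
  rw [integral_gaussian_Ioi, div_self Real.pi_ne_zero, Real.sqrt_one]

lemma Efun_neg (t : ℝ) : Efun (-t) = - Efun t := by
  unfold Efun
  have h : ∀ a b : ℝ, (∫ u in a..b, Real.exp (-Real.pi * (-u) ^ 2))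
      = ∫ u in a..b, Real.exp (-Real.pi * u ^ 2) := by
    intro a b; congr 1; ext u; ring_nf
  have := intervalIntegral.integral_comp_neg (a := (0:ℝ)) (b := t)
    (fun u => Real.exp (-Real.pi * u ^ 2))
  rw [h] at this
  rw [neg_zero] at this
  rw [this, intervalIntegral.integral_symm]
  ring

lemma one_sub_Efun {t : ℝ} (ht : 0 ≤ t) :
    1 - Efun t = 2 * ∫ x in Ioi t, Real.exp (-Real.pi * x ^ 2) := by
  have hsplit : (∫ x in Ioc (0:ℝ) t, Real.exp (-Real.pi * x ^ 2))
      + ∫ x in Ioi t, Real.exp (-Real.pi * x ^ 2)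
      = ∫ x in Ioi (0:ℝ), Real.exp (-Real.pi * x ^ 2) := by
    rw [← setIntegral_union Set.Ioc_disjoint_Ioi_same measurableSet_Ioi
      gauss_integrable.integrableOn gauss_integrable.integrableOn,
      Ioc_union_Ioi_eq_Ioi ht]
  rw [integral_gauss_Ioi_zero] at hsplit
  unfold Efun
  rw [intervalIntegral.integral_of_le ht]
  linarith

lemma one_sub_Efun_nonneg {t : ℝ} (ht : 0 ≤ t) : 0 ≤ 1 - Efun t := by
  rw [one_sub_Efun ht]
  have : 0 ≤ ∫ x in Ioi t, Real.exp (-Real.pi * x ^ 2) :=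
    setIntegral_nonneg measurableSet_Ioi fun x _ => (Real.exp_pos _).le
  linarith

lemma one_sub_Efun_le {t : ℝ} (ht : 0 ≤ t) :
    1 - Efun t ≤ 2 * Real.exp (-Real.pi * t ^ 2) := by
  rw [one_sub_Efun ht]
  have h1 : (∫ x in Ioi t, Real.exp (-Real.pi * x ^ 2))
      ≤ ∫ x in Ioi t, Real.exp (-Real.pi * t ^ 2) * Real.exp (-Real.pi * (x - t) ^ 2) := by
    refine setIntegral_mono_on gauss_integrable.integrableOn ?_ measurableSet_Ioi ?_
    · exact (((integrable_exp_neg_mul_sq Real.pi_pos).comp_sub_right t).const_mul _).integrableOn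
    · intro x hx
      rw [← Real.exp_add]
      apply Real.exp_le_exp.2
      have hxt : t < x := hx
      nlinarith [mul_nonneg Real.pi_pos.le (mul_nonneg ht (sub_nonneg.2 hxt.le))]
  have h2 : (∫ x in Ioi t, Real.exp (-Real.pi * t ^ 2) * Real.exp (-Real.pi * (x - t) ^ 2))
      ≤ Real.exp (-Real.pi * t ^ 2) := by
    rw [MeasureTheory.integral_const_mul]
    have h3 : (∫ x in Ioi t, Real.exp (-Real.pi * (x - t) ^ 2))
        ≤ ∫ x : ℝ, Real.exp (-Real.pi * (x - t) ^ 2) :=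
      setIntegral_le_integral ((integrable_exp_neg_mul_sq Real.pi_pos).comp_sub_right t)
        (Eventually.of_forall fun x => (Real.exp_pos _).le)
    have h4 : (∫ x : ℝ, Real.exp (-Real.pi * (x - t) ^ 2)) = 1 := by
      rw [integral_sub_right_eq_self (fun x => Real.exp (-Real.pi * x ^ 2)) t,
        integral_gaussian, div_self Real.pi_ne_zero, Real.sqrt_one]
    nlinarith [Real.exp_pos (-Real.pi * t ^ 2)]
  linarith

lemma abs_one_sub_Efun_le {t : ℝ} (ht : 0 ≤ t) :
    |1 - Efun t| ≤ 2 * Real.exp (-Real.pi * t ^ 2) := by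
  rw [abs_of_nonneg (one_sub_Efun_nonneg ht)]; exact one_sub_Efun_le ht

lemma abs_neg_one_sub_Efun_le {t : ℝ} (ht : t ≤ 0) :
    |(-1) - Efun t| ≤ 2 * Real.exp (-Real.pi * t ^ 2) := by
  have h : (-1 : ℝ) - Efun t = -(1 - Efun (-t)) := by rw [Efun_neg]; ring
  rw [h, abs_neg]
  have := abs_one_sub_Efun_le (neg_nonneg.2 ht)
  rwa [neg_pow, neg_one_pow_eq_one_iff_even (by norm_num : (-1:ℝ) ≠ 1) |>.2 ⟨1, rfl⟩, one_mul]
    at this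

lemma summable_gauss (a b : ℝ) (ha : 0 < a) :
    Summable fun m : ℤ => Real.exp (-a * (m : ℝ) ^ 2 + b * m) := by
  have hτ : (0:ℝ) < ((a / Real.pi : ℝ) * Complex.I).im := by
    simp [div_pos ha Real.pi_pos]
  have h := (summable_jacobiTheta₂_term_iff ((-b / (2 * Real.pi) : ℝ) * Complex.I)
    ((a / Real.pi : ℝ) * Complex.I)).2 hτ
  have h2 := h.norm
  refine h2.congr fun m => ?_
  rw [norm_jacobiTheta₂_term]
  congr 1
  have hπ : (Real.pi : ℝ) ≠ 0 := Real.pi_ne_zero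
  simp only [Complex.mul_I_im, Complex.ofReal_re]
  field_simp
  ring

end ZwegersAux

section MainProof

open ZwegersAux Complex

variable (τ u : ℂ)

/-- The summand of `Rfun u τ`. -/
noncomputable def Rterm (n : ℤ) : ℂ :=
  ((Real.sign ((n : ℝ) + 1/2)
      - Efun (((n : ℝ) + 1/2 + u.im / τ.im) * Real.sqrt (2 * τ.im)) : ℝ) : ℂ)
    * (-1 : ℂ) ^ n
    * Complex.exp (-Real.pi * Complex.I * ((n : ℂ) + 1/2) ^ 2 * τ)
    * Complex.exp (-2 * Real.pi * Complex.I * ((n : ℂ) + 1/2) * u)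

/-- The "shifted" summand. -/
noncomputable def Bterm (m : ℤ) : ℂ :=
  ((Real.sign ((m : ℝ) - 1/2)
      - Efun (((m : ℝ) + 1/2 + u.im / τ.im) * Real.sqrt (2 * τ.im)) : ℝ) : ℂ)
    * (-1 : ℂ) ^ (m + 1)
    * Complex.exp (-Real.pi * Complex.I * ((m : ℂ) + 1/2) ^ 2 * τ)
    * Complex.exp (-2 * Real.pi * Complex.I * ((m : ℂ) + 1/2) * u)

lemma Rfun_eq : Rfun u τ = ∑' n : ℤ, Rterm τ u n := rfl

lemma sign_Efun_bound {x : ℝ} (c s : ℝ) (hsgn : 0 < x * (x + c)) (hs : 0 ≤ s) :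
    |Real.sign x - Efun ((x + c) * s)| ≤ 2 * Real.exp (-Real.pi * ((x + c) * s) ^ 2) := by
  rcases lt_trichotomy x 0 with hx | hx | hx
  · have hxc : x + c < 0 := by nlinarith
    rw [Real.sign_of_neg hx]
    exact ZwegersAux.abs_neg_one_sub_Efun_le (mul_nonpos_iff.2 (Or.inr ⟨hxc.le, hs⟩))
  · simp [hx] at hsgn
  · have hxc : 0 < x + c := by nlinarith
    rw [Real.sign_of_pos hx]
    exact ZwegersAux.abs_one_sub_Efun_le (mul_nonneg hxc.le hs)

lemma norm_Rterm (n : ℤ) :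
    ‖Rterm τ u n‖ = |Real.sign ((n : ℝ) + 1/2)
        - Efun (((n : ℝ) + 1/2 + u.im / τ.im) * Real.sqrt (2 * τ.im))|
      * Real.exp (Real.pi * ((n : ℝ) + 1/2) ^ 2 * τ.im + 2 * Real.pi * ((n : ℝ) + 1/2) * u.im)
    := by
  have hcast : ((n : ℂ) + 1/2) = ((((n : ℝ) + 1/2 : ℝ)) : ℂ) := by push_cast; ring
  have h3 : (-(Real.pi : ℂ) * Complex.I * ((((n : ℝ) + 1/2 : ℝ)) : ℂ) ^ 2 * τ).re
      = Real.pi * ((n : ℝ) + 1/2) ^ 2 * τ.im := by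
    have he : (-(Real.pi : ℂ) * Complex.I * ((((n : ℝ) + 1/2 : ℝ)) : ℂ) ^ 2 * τ)
        = -(((Real.pi * ((n : ℝ) + 1/2) ^ 2 : ℝ) : ℂ) * (τ * Complex.I)) := by
      push_cast; ring
    rw [he, Complex.neg_re, Complex.re_ofReal_mul, Complex.mul_I_re]
    ring
  have h4 : ((-2 : ℂ) * (Real.pi : ℂ) * Complex.I * ((((n : ℝ) + 1/2 : ℝ)) : ℂ) * u).re
      = 2 * Real.pi * ((n : ℝ) + 1/2) * u.im := by
    have he : ((-2 : ℂ) * (Real.pi : ℂ) * Complex.I * ((((n : ℝ) + 1/2 : ℝ)) : ℂ) * u)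
        = -(((2 * Real.pi * ((n : ℝ) + 1/2) : ℝ) : ℂ) * (u * Complex.I)) := by
      push_cast; ring
    rw [he, Complex.neg_re, Complex.re_ofReal_mul, Complex.mul_I_re]
    ring
  have h2 : ‖(-1 : ℂ) ^ n‖ = 1 := by rw [norm_zpow]; simp
  rw [Rterm, hcast, norm_mul, norm_mul, norm_mul, h2,
    Complex.norm_exp, Complex.norm_exp, h3, h4,
    Complex.norm_real, Real.norm_eq_abs, Real.exp_add]
  ring

lemma summable_Rterm (hτ : 0 < τ.im) : Summable (Rterm τ u) := by
  set y : ℝ := τ.im with hy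
  set c : ℝ := u.im / y with hc
  set c' : ℝ := 1/2 + c with hc'
  have hcy : c * y = u.im := div_mul_cancel₀ _ hτ.ne'
  have hsqrt : Real.sqrt (2 * y) ^ 2 = 2 * y := Real.sq_sqrt (by positivity)
  have hgauss : Summable fun m : ℤ =>
      (2 * Real.exp (-Real.pi * y * c' ^ 2)) *
        Real.exp (-(Real.pi * y) * (m : ℝ) ^ 2 + (-2 * Real.pi * y * c') * m) :=
    (ZwegersAux.summable_gauss (Real.pi * y) (-2 * Real.pi * y * c')
      (by positivity)).mul_left _
  refine Summable.of_norm_bounded_eventually hgauss ?_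
  have hkey : ∀ n : ℤ, 0 < ((n : ℝ) + 1/2) * ((n : ℝ) + 1/2 + c) →
      ‖Rterm τ u n‖ ≤
        (2 * Real.exp (-Real.pi * y * c' ^ 2)) *
          Real.exp (-(Real.pi * y) * (n : ℝ) ^ 2 + (-2 * Real.pi * y * c') * n) := by
    intro n hn
    rw [norm_Rterm]
    set ν : ℝ := (n : ℝ) + 1/2 with hν
    have hb := sign_Efun_bound (x := ν) c (Real.sqrt (2 * y)) hn (Real.sqrt_nonneg _)
    calc |Real.sign ν - Efun ((ν + c) * Real.sqrt (2 * y))|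
          * Real.exp (Real.pi * ν ^ 2 * y + 2 * Real.pi * ν * u.im)
        ≤ (2 * Real.exp (-Real.pi * ((ν + c) * Real.sqrt (2 * y)) ^ 2))
          * Real.exp (Real.pi * ν ^ 2 * y + 2 * Real.pi * ν * u.im) := by
          gcongr
      _ ≤ (2 * Real.exp (-Real.pi * y * c' ^ 2)) *
          Real.exp (-(Real.pi * y) * (n : ℝ) ^ 2 + (-2 * Real.pi * y * c') * n) := by
          rw [mul_assoc, ← Real.exp_add]
          conv_rhs => rw [mul_assoc, ← Real.exp_add]
          gcongr 2 * Real.exp ?_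
          rw [mul_pow, hsqrt, ← hcy, hν, hc']
          have hpy : (0:ℝ) ≤ Real.pi * y := by positivity
          nlinarith [mul_nonneg hpy (sq_nonneg c)]
  rw [Int.cofinite_eq, Filter.eventually_sup]
  constructor
  · rw [Filter.eventually_atBot]
    refine ⟨-⌈|c|⌉ - 1, fun m hm => hkey m ?_⟩
    have h1 : (m : ℝ) ≤ -⌈|c|⌉ - 1 := by exact_mod_cast hm
    have h2 : |c| ≤ ⌈|c|⌉ := Int.le_ceil _
    have h3 : -|c| ≤ c := neg_abs_le c
    have h4 : c ≤ |c| := le_abs_self c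
    nlinarith
  · rw [Filter.eventually_atTop]
    refine ⟨⌈|c|⌉, fun m hm => hkey m ?_⟩
    have h1 : ((⌈|c|⌉ : ℤ) : ℝ) ≤ (m : ℝ) := by exact_mod_cast hm
    have h2 : |c| ≤ ⌈|c|⌉ := Int.le_ceil _
    have h3 : -|c| ≤ c := neg_abs_le c
    have h4 : c ≤ |c| := le_abs_self c
    nlinarith

lemma shift_eq (hτ : 0 < τ.im) (n : ℤ) :
    Complex.exp (-2 * Real.pi * Complex.I * u - Real.pi * Complex.I * τ)
      * Rterm τ (u + τ) n = Bterm τ u (n + 1) := by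
  rw [Rterm, Bterm]
  have hA : ((Real.sign ((n : ℝ) + 1/2)
      - Efun (((n : ℝ) + 1/2 + (u + τ).im / τ.im) * Real.sqrt (2 * τ.im)) : ℝ) : ℂ)
      = ((Real.sign (((n + 1 : ℤ) : ℝ) - 1/2)
      - Efun ((((n + 1 : ℤ) : ℝ) + 1/2 + u.im / τ.im) * Real.sqrt (2 * τ.im)) : ℝ) : ℂ) := by
    have h1 : ((n : ℝ) + 1/2) = (((n + 1 : ℤ) : ℝ) - 1/2) := by push_cast; ring
    have h2 : ((n : ℝ) + 1/2 + (u + τ).im / τ.im)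
        = (((n + 1 : ℤ) : ℝ) + 1/2 + u.im / τ.im) := by
      rw [Complex.add_im, add_div, div_self hτ.ne']
      push_cast; ring
    rw [h2, h1]
  have hP : (-1 : ℂ) ^ n = (-1 : ℂ) ^ (n + 1 + 1) := by
    rw [zpow_add₀ (by norm_num : (-1:ℂ) ≠ 0) (n + 1) 1,
      zpow_add₀ (by norm_num : (-1:ℂ) ≠ 0) n 1]
    simp
  have hexp : Complex.exp (-2 * Real.pi * Complex.I * u - Real.pi * Complex.I * τ)
      * (Complex.exp (-Real.pi * Complex.I * ((n : ℂ) + 1/2) ^ 2 * τ)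
        * Complex.exp (-2 * Real.pi * Complex.I * ((n : ℂ) + 1/2) * (u + τ)))
      = Complex.exp (-Real.pi * Complex.I * (((n + 1 : ℤ) : ℂ) + 1/2) ^ 2 * τ)
        * Complex.exp (-2 * Real.pi * Complex.I * (((n + 1 : ℤ) : ℂ) + 1/2) * u) := by
    rw [← Complex.exp_add, ← Complex.exp_add, ← Complex.exp_add]
    congr 1
    push_cast
    ring
  calc Complex.exp (-2 * Real.pi * Complex.I * u - Real.pi * Complex.I * τ)
      * (((Real.sign ((n : ℝ) + 1/2)
          - Efun (((n : ℝ) + 1/2 + (u + τ).im / τ.im) * Real.sqrt (2 * τ.im)) : ℝ) : ℂ)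
        * (-1 : ℂ) ^ n
        * Complex.exp (-Real.pi * Complex.I * ((n : ℂ) + 1/2) ^ 2 * τ)
        * Complex.exp (-2 * Real.pi * Complex.I * ((n : ℂ) + 1/2) * (u + τ)))
      = ((Real.sign ((n : ℝ) + 1/2)
          - Efun (((n : ℝ) + 1/2 + (u + τ).im / τ.im) * Real.sqrt (2 * τ.im)) : ℝ) : ℂ)
        * (-1 : ℂ) ^ n
        * (Complex.exp (-2 * Real.pi * Complex.I * u - Real.pi * Complex.I * τ)
          * (Complex.exp (-Real.pi * Complex.I * ((n : ℂ) + 1/2) ^ 2 * τ)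
            * Complex.exp (-2 * Real.pi * Complex.I * ((n : ℂ) + 1/2) * (u + τ)))) := by
        ring
    _ = _ := by rw [hexp, hA, hP]; ring

lemma FB_eq (m : ℤ) : Rterm τ u m + Bterm τ u m
    = if m = 0 then
        2 * Complex.exp (-Real.pi * Complex.I * u - Real.pi * Complex.I * τ / 4) else 0 := by
  rw [Rterm, Bterm]
  have hP : (-1 : ℂ) ^ (m + 1) = -(-1 : ℂ) ^ m := by
    rw [zpow_add₀ (by norm_num : (-1:ℂ) ≠ 0) m 1]; simp
  rcases eq_or_ne m 0 with rfl | hm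
  · have hs1 : Real.sign ((0 : ℝ) + 1/2) = 1 := Real.sign_of_pos (by norm_num)
    have hs2 : Real.sign ((0 : ℝ) - 1/2) = -1 := Real.sign_of_neg (by norm_num)
    have hexp : Complex.exp (-Real.pi * Complex.I * ((0 : ℂ) + 1/2) ^ 2 * τ)
        * Complex.exp (-2 * Real.pi * Complex.I * ((0 : ℂ) + 1/2) * u)
        = Complex.exp (-Real.pi * Complex.I * u - Real.pi * Complex.I * τ / 4) := by
      rw [← Complex.exp_add]
      congr 1
      push_cast
      ring
    simp only [if_pos rfl, Int.cast_zero, hP, hs1, hs2, zpow_zero]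
    rw [← hexp]
    push_cast
    ring
  · have hs : Real.sign ((m : ℝ) + 1/2) = Real.sign ((m : ℝ) - 1/2) := by
      rcases lt_or_gt_of_ne hm with h | h
      · have h0 : m ≤ -1 := by omega
        have h1 : (m : ℝ) ≤ -1 := by exact_mod_cast h0
        rw [Real.sign_of_neg (by linarith), Real.sign_of_neg (by linarith)]
      · have h0 : 1 ≤ m := by omega
        have h1 : (1 : ℝ) ≤ (m : ℝ) := by exact_mod_cast h0
        rw [Real.sign_of_pos (by linarith), Real.sign_of_pos (by linarith)]
    rw [if_neg hm, hs, hP]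
    ring

theorem Rfun_add_tau' (hτ : 0 < τ.im) :
    Rfun u τ + Complex.exp (-2 * Real.pi * Complex.I * u - Real.pi * Complex.I * τ)
        * Rfun (u + τ) τ
      = 2 * Complex.exp (-Real.pi * Complex.I * u - Real.pi * Complex.I * τ / 4) := by
  have hsumF : Summable (fun m : ℤ => Rterm τ u m + Bterm τ u m) := by
    apply summable_of_ne_finset_zero (s := ({0} : Finset ℤ))
    intro m hm
    rw [FB_eq]
    simp [Finset.mem_singleton.not.1 hm]
  have hsumR : Summable (Rterm τ u) := summable_Rterm τ u hτ
  have hsumB : Summable (Bterm τ u) := by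
    have := hsumF.sub hsumR
    exact this.congr fun m => by ring
  have hK : Complex.exp (-2 * Real.pi * Complex.I * u - Real.pi * Complex.I * τ)
      * Rfun (u + τ) τ = ∑' m : ℤ, Bterm τ u m := by
    rw [Rfun_eq, ← tsum_mul_left]
    rw [tsum_congr (shift_eq τ u hτ)]
    exact (Equiv.addRight (1 : ℤ)).tsum_eq (Bterm τ u)
  rw [Rfun_eq, hK, ← hsumR.tsum_add hsumB, tsum_congr (FB_eq τ u), tsum_ite_eq]

end MainProof

/-- `R(u; τ) + e^{−2πiu − πiτ} R(u+τ; τ) = 2 e^{−πiu − πiτ/4}`. -/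
theorem Rfun_add_tau (τ u : ℂ) (hτ : 0 < τ.im) :
    Rfun u τ + Complex.exp (-2 * Real.pi * Complex.I * u - Real.pi * Complex.I * τ)
        * Rfun (u + τ) τ
      = 2 * Complex.exp (-Real.pi * Complex.I * u - Real.pi * Complex.I * τ / 4) := by
  exact Rfun_add_tau' τ u hτ
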